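/- Let H > 0 and let c : [0,H] → ℝ have finite pointwise total variation V on [0,H], with m ≤ c(y) ≤ M for all y ∈ [0,H]. Then there exists a sequence (cₙ) of step functions on [0,H] (each piecewise constant with finitely many pieces) such that cₙ → c uniformly on [0,H], the pointwise total variation of each cₙ on [0,H] is at most V, and inf_{[0,H]} c ≤ cₙ(y) ≤ sup_{[0,H]} c for all y ∈ [0,H] and all n. -/

import Mathlib

open Set MeasureTheory Filter

/-- `g` is a step function on `[0,H]`: there is a finite partition
`0 = p 0 < p 1 < ⋯ < p k = H` such that `g` is constant on each open subinterval. -/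
def IsStepFunctionOn (H : ℝ) (g : ℝ → ℝ) : Prop :=
  ∃ (k : ℕ) (p v : ℕ → ℝ), 0 < k ∧ p 0 = 0 ∧ p k = H ∧
    (∀ i < k, p i < p (i + 1)) ∧
    (∀ i < k, ∀ y ∈ Set.Ioo (p i) (p (i + 1)), g y = v i)

lemma stmt15_key (H : ℝ) (hH : 0 < H) (c : ℝ → ℝ)
    (hBV : eVariationOn c (Set.Icc (0:ℝ) H) ≠ ⊤) {ε : ℝ} (hε : 0 < ε) :
    ∃ φ : ℝ → ℝ, MonotoneOn φ (Set.Icc 0 H) ∧ Set.MapsTo φ (Set.Icc 0 H) (Set.Icc 0 H) ∧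
      (∀ y ∈ Set.Icc (0:ℝ) H, dist (c (φ y)) (c y) ≤ ε) ∧ IsStepFunctionOn H (c ∘ φ) := by
  classical
  set s : Set ℝ := Set.Icc (0:ℝ) H with hs
  have h0s : (0:ℝ) ∈ s := ⟨le_rfl, hH.le⟩
  have hHs : H ∈ s := ⟨hH.le, le_rfl⟩
  have hfin : ∀ t : Set ℝ, t ⊆ s → eVariationOn c t ≠ ⊤ := fun t ht =>
    ne_top_of_le_ne_top hBV (eVariationOn.mono c ht)
  set vfun : ℝ → ℝ := fun t => (eVariationOn c (s ∩ Set.Icc 0 t)).toReal with hvfun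
  have hvmono : ∀ x y : ℝ, x ≤ y → vfun x ≤ vfun y := by
    intro x y hxy
    refine (ENNReal.toReal_le_toReal (hfin _ inter_subset_left) (hfin _ inter_subset_left)).2 ?_
    exact eVariationOn.mono c (inter_subset_inter_right _ (Set.Icc_subset_Icc_right hxy))
  have hdist : ∀ x y : ℝ, x ∈ s → y ∈ s → x ≤ y → dist (c x) (c y) ≤ vfun y - vfun x := by
    intro x y hx hy hxy
    have key := eVariationOn.Icc_add_Icc c (s := s) hx.1 hxy hx
    have h1 : eVariationOn c (s ∩ Set.Icc 0 x) ≠ ⊤ := hfin _ inter_subset_left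
    have h2 : eVariationOn c (s ∩ Set.Icc x y) ≠ ⊤ := hfin _ inter_subset_left
    have hy' : vfun y = vfun x + (eVariationOn c (s ∩ Set.Icc x y)).toReal := by
      simp only [hvfun]
      rw [← key, ENNReal.toReal_add h1 h2]
    have hd : edist (c x) (c y) ≤ eVariationOn c (s ∩ Set.Icc x y) :=
      eVariationOn.edist_le c ⟨hx, le_rfl, hxy⟩ ⟨hy, hxy, le_rfl⟩
    have hd' : dist (c x) (c y) ≤ (eVariationOn c (s ∩ Set.Icc x y)).toReal := by
      rw [dist_edist]
      exact (ENNReal.toReal_le_toReal (edist_ne_top _ _) h2).2 hd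
    linarith
  -- levels
  set N : ℕ := ⌈(vfun H - vfun 0) / ε⌉₊ with hN
  have hNbig : vfun H ≤ vfun 0 + N * ε := by
    have h1 : (vfun H - vfun 0) / ε ≤ (N : ℝ) := Nat.le_ceil _
    have h2 := (div_le_iff₀ hε).1 h1
    linarith
  set lev : ℕ → Set ℝ := fun j => {t | t ∈ s ∧ vfun t ≤ vfun 0 + j * ε} with hlev
  have hlev0 : ∀ j, (0:ℝ) ∈ lev j := by
    intro j
    refine ⟨h0s, ?_⟩
    have : (0:ℝ) ≤ (j:ℝ) * ε := mul_nonneg (Nat.cast_nonneg j) hε.le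
    linarith
  have hlevbdd : ∀ j, BddAbove (lev j) := fun j => ⟨H, fun t ht => ht.1.2⟩
  set τ : ℕ → ℝ := fun j => sSup (lev j) with hτ
  have hτmem : ∀ j, τ j ∈ s :=
    fun j => ⟨le_csSup (hlevbdd j) (hlev0 j), csSup_le ⟨0, hlev0 j⟩ fun t ht => ht.1.2⟩
  have hτN : τ N = H :=
    le_antisymm (hτmem N).2 (le_csSup (hlevbdd N) ⟨hHs, hNbig⟩)
  -- the finite set of partition points
  set S : Finset ℝ := insert 0 ((Finset.range (N+1)).image τ) with hSdef
  have hS0 : (0:ℝ) ∈ S := Finset.mem_insert_self _ _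
  have hSH : H ∈ S := by
    refine Finset.mem_insert_of_mem (Finset.mem_image.2 ⟨N, Finset.mem_range.2 (Nat.lt_succ_self N), hτN⟩)
  have hSsub : ∀ z ∈ S, z ∈ s := by
    intro z hz
    rcases Finset.mem_insert.1 hz with rfl | hz
    · exact h0s
    · obtain ⟨j, _, rfl⟩ := Finset.mem_image.1 hz
      exact hτmem j
  -- gap lemma
  have hgap : ∀ a b : ℝ, a ∈ S → b ∈ S → (∀ z ∈ S, z ≤ a ∨ b ≤ z) →
      ∀ x x' : ℝ, x ∈ s → x' ∈ s → a < x → x ≤ x' → x' < b → vfun x' - vfun x ≤ ε := by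
    intro a b haS hbS hsplit x x' hx hx' hax hxx' hx'b
    have hab : a < b := lt_of_lt_of_le (lt_of_lt_of_le hax hxx') hx'b.le
    by_cases hτ0 : τ 0 ≤ a
    · -- there is a greatest level below a
      set j : ℕ := Nat.findGreatest (fun j => τ j ≤ a) N with hj
      have hjspec : τ j ≤ a :=
        Nat.findGreatest_spec (P := fun j => τ j ≤ a) (Nat.zero_le N) hτ0
      have hjle : j ≤ N := Nat.findGreatest_le N
      have hjN : j ≠ N := by
        intro h
        have : H ≤ a := by rw [← hτN, ← h]; exact hjspec
        have hbH : b ≤ H := (hSsub b hbS).2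
        linarith
      have hj1 : ¬ τ (j+1) ≤ a :=
        Nat.findGreatest_is_greatest (Nat.lt_succ_self j) (Nat.succ_le_of_lt (lt_of_le_of_ne hjle hjN))
      have hj1b : b ≤ τ (j+1) := by
        have := hsplit (τ (j+1)) (Finset.mem_insert_of_mem (Finset.mem_image.2
          ⟨j+1, Finset.mem_range.2 (Nat.succ_lt_succ (lt_of_le_of_ne hjle hjN)), rfl⟩))
        rcases this with h | h
        · exact absurd h hj1
        · exact h
      have hxlow : vfun 0 + j * ε < vfun x := by
        by_contra h
        push_neg at h
        have : x ∈ lev j := ⟨hx, h⟩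
        have : x ≤ τ j := le_csSup (hlevbdd j) this
        linarith
      have hxhigh : vfun x' ≤ vfun 0 + (j+1) * ε := by
        have hlt : x' < τ (j+1) := lt_of_lt_of_le hx'b hj1b
        obtain ⟨t, htmem, hxt⟩ := exists_lt_of_lt_csSup ⟨0, hlev0 (j+1)⟩ hlt
        have h2 := htmem.2
        have h1 := hvmono x' t hxt.le
        push_cast at h2
        linarith
      linarith
    · -- all partition points are above a, so on (a,b) we are below level 0
      push_neg at hτ0
      have hbτ0 : b ≤ τ 0 := by
        have hτ0S : τ 0 ∈ S := Finset.mem_insert_of_mem (Finset.mem_image.2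
          ⟨0, Finset.mem_range.2 (Nat.succ_pos N), rfl⟩)
        rcases hsplit (τ 0) hτ0S with h | h
        · linarith
        · exact h
      have hxhigh : vfun x' ≤ vfun 0 := by
        have hlt : x' < τ 0 := lt_of_lt_of_le hx'b hbτ0
        obtain ⟨t, htmem, hxt⟩ := exists_lt_of_lt_csSup ⟨0, hlev0 0⟩ hlt
        have := htmem.2
        have h0 : vfun t ≤ vfun 0 := by push_cast at this; linarith
        exact le_trans (hvmono _ _ hxt.le) h0
      have : vfun 0 ≤ vfun x := hvmono _ _ hx.1
      linarith
  -- the retraction φ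
  set A : ℝ → Set ℝ := fun y => {z | z ∈ (↑S : Set ℝ) ∧ z ≤ y} with hA
  set B : ℝ → Set ℝ := fun y => {z | z ∈ (↑S : Set ℝ) ∧ y ≤ z} with hB
  have hAfin : ∀ y, (A y).Finite := fun y => S.finite_toSet.subset fun z hz => hz.1
  have hBfin : ∀ y, (B y).Finite := fun y => S.finite_toSet.subset fun z hz => hz.1
  have hAne : ∀ y ∈ s, (A y).Nonempty := fun y hy => ⟨0, hS0, hy.1⟩
  have hBne : ∀ y ∈ s, (B y).Nonempty := fun y hy => ⟨H, hSH, hy.2⟩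
  set φ : ℝ → ℝ := fun y => (sSup (A y) + sInf (B y)) / 2 with hφ
  have hAmem : ∀ y ∈ s, sSup (A y) ∈ A y := fun y hy => (hAne y hy).csSup_mem (hAfin y)
  have hBmem : ∀ y ∈ s, sInf (B y) ∈ B y := fun y hy => (hBne y hy).csInf_mem (hBfin y)
  have hmaps : Set.MapsTo φ s s := by
    intro y hy
    have ha := hAmem y hy
    have hb := hBmem y hy
    have ha0 : 0 ≤ sSup (A y) := (hSsub _ ha.1).1
    have hbH : sInf (B y) ≤ H := (hSsub _ hb.1).2
    have hab : sSup (A y) ≤ sInf (B y) := le_trans ha.2 hb.2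
    constructor <;> simp only [hφ] <;> linarith
  have hmono : MonotoneOn φ s := by
    intro y hy y' hy' hle
    have h1 : sSup (A y) ≤ sSup (A y') :=
      csSup_le_csSup (hAfin y').bddAbove (hAne y hy) fun z hz => ⟨hz.1, le_trans hz.2 hle⟩
    have h2 : sInf (B y) ≤ sInf (B y') :=
      csInf_le_csInf (hBfin y).bddBelow (hBne y' hy') fun z hz => ⟨hz.1, le_trans hle hz.2⟩
    simp only [hφ]
    linarith
  have hdistφ : ∀ y ∈ s, dist (c (φ y)) (c y) ≤ ε := by
    intro y hy
    by_cases hyS : y ∈ (↑S : Set ℝ)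
    · have ha : sSup (A y) = y :=
        le_antisymm (hAmem y hy).2 (le_csSup (hAfin y).bddAbove ⟨hyS, le_rfl⟩)
      have hb : sInf (B y) = y :=
        le_antisymm (csInf_le (hBfin y).bddBelow ⟨hyS, le_rfl⟩) (hBmem y hy).2
      have : φ y = y := by simp only [hφ]; rw [ha, hb]; ring
      rw [this, dist_self]
      exact hε.le
    · have ha := hAmem y hy
      have hb := hBmem y hy
      have haS : sSup (A y) ∈ S := ha.1
      have hbS : sInf (B y) ∈ S := hb.1
      have hay : sSup (A y) < y := lt_of_le_of_ne ha.2 (fun h => hyS (h ▸ haS))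
      have hyb : y < sInf (B y) := lt_of_le_of_ne hb.2 (fun h => hyS (h ▸ hbS))
      have hsplit : ∀ z ∈ S, z ≤ sSup (A y) ∨ sInf (B y) ≤ z := by
        intro z hz
        by_cases h : z ≤ y
        · exact Or.inl (le_csSup (hAfin y).bddAbove ⟨hz, h⟩)
        · exact Or.inr (csInf_le (hBfin y).bddBelow ⟨hz, (not_le.1 h).le⟩)
      have hφy : sSup (A y) < φ y ∧ φ y < sInf (B y) := by
        constructor <;> simp only [hφ] <;> linarith
      have hφys : φ y ∈ s := hmaps hy
      rcases le_total (φ y) y with h | h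
      · have := hgap _ _ haS hbS hsplit (φ y) y hφys hy hφy.1 h hyb
        have hd := hdist (φ y) y hφys hy h
        linarith
      · have := hgap _ _ haS hbS hsplit y (φ y) hy hφys hay h hφy.2
        have hd := hdist y (φ y) hy hφys h
        rw [dist_comm] at hd
        linarith
  -- step function structure
  refine ⟨φ, hmono, hmaps, hdistφ, ?_⟩
  set L : List ℝ := S.sort (· ≤ ·) with hL
  have hlen : L.length = S.card := Finset.length_sort _
  have hcard : 1 < S.card := Finset.one_lt_card.2 ⟨0, hS0, H, hSH, hH.ne⟩
  have hlen2 : 2 ≤ L.length := by omega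
  set k : ℕ := L.length - 1 with hk
  have hkpos : 0 < k := by omega
  have hklen : k < L.length := by omega
  set p : ℕ → ℝ := fun i => if h : i < L.length then L.get ⟨i, h⟩ else H with hp
  have hsorted : L.Pairwise (· < ·) := S.sortedLT_sort.pairwise
  have hmemL : ∀ z : ℝ, z ∈ L ↔ z ∈ S := fun z => Finset.mem_sort _
  have hget_mem : ∀ (i : ℕ) (h : i < L.length), L.get ⟨i, h⟩ ∈ S :=
    fun i h => (hmemL _).1 (L.get_mem _)
  have hgetmono : ∀ (i j : ℕ) (hi : i < L.length) (hj : j < L.length), i ≤ j →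
      L.get ⟨i, hi⟩ ≤ L.get ⟨j, hj⟩ := by
    intro i j hi hj hij
    rcases eq_or_lt_of_le hij with rfl | hlt
    · exact le_rfl
    · exact (hsorted.rel_get_of_lt (show (⟨i, hi⟩ : Fin L.length) < ⟨j, hj⟩ from hlt)).le
  have hp0 : p 0 = 0 := by
    have h0 : (0:ℕ) < L.length := by omega
    have hmem0 : (0:ℝ) ∈ L := (hmemL 0).2 hS0
    obtain ⟨j, hjval⟩ := List.mem_iff_get.1 hmem0
    have h1 : L.get ⟨0, h0⟩ ≤ 0 := hjval ▸ hgetmono 0 j h0 j.2 (Nat.zero_le _)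
    have h2 : 0 ≤ L.get ⟨0, h0⟩ := (hSsub _ (hget_mem 0 h0)).1
    simp only [hp, dif_pos h0]
    linarith
  have hpk : p k = H := by
    have hmemH : H ∈ L := (hmemL H).2 hSH
    obtain ⟨j, hjval⟩ := List.mem_iff_get.1 hmemH
    have hjk : (j : ℕ) ≤ k := by have := j.2; omega
    have h1 : H ≤ L.get ⟨k, hklen⟩ := hjval ▸ hgetmono j k j.2 hklen hjk
    have h2 : L.get ⟨k, hklen⟩ ≤ H := (hSsub _ (hget_mem k hklen)).2
    simp only [hp, dif_pos hklen]
    linarith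
  have hpi : ∀ i, i < k → p i < p (i+1) := by
    intro i hik
    have hi : i < L.length := by omega
    have hi1 : i + 1 < L.length := by omega
    simp only [hp, dif_pos hi, dif_pos hi1]
    exact hsorted.rel_get_of_lt (show (⟨i, hi⟩ : Fin L.length) < ⟨i+1, hi1⟩ from Nat.lt_succ_self i)
  refine ⟨k, p, fun i => c ((p i + p (i+1)) / 2), hkpos, hp0, hpk, hpi, ?_⟩
  intro i hik y hy
  have hi : i < L.length := by omega
  have hi1 : i + 1 < L.length := by omega
  have hpiv : p i = L.get ⟨i, hi⟩ := by simp only [hp, dif_pos hi]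
  have hpi1v : p (i+1) = L.get ⟨i+1, hi1⟩ := by simp only [hp, dif_pos hi1]
  have hpiS : p i ∈ S := by rw [hpiv]; exact hget_mem i hi
  have hpi1S : p (i+1) ∈ S := by rw [hpi1v]; exact hget_mem (i+1) hi1
  -- every element of S is ≤ p i or ≥ p (i+1)
  have hsplit : ∀ z ∈ S, z ≤ p i ∨ p (i+1) ≤ z := by
    intro z hz
    obtain ⟨j, hjval⟩ := List.mem_iff_get.1 ((hmemL z).2 hz)
    rcases le_or_gt (j : ℕ) i with h | h
    · left; rw [← hjval, hpiv]; exact hgetmono j i j.2 hi h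
    · right; rw [← hjval, hpi1v]; exact hgetmono (i+1) j hi1 j.2 h
  have hAy : sSup (A y) = p i := by
    refine IsGreatest.csSup_eq ⟨⟨hpiS, hy.1.le⟩, ?_⟩
    rintro z ⟨hzS, hzy⟩
    rcases hsplit z hzS with h | h
    · exact h
    · linarith [hy.2]
  have hBy : sInf (B y) = p (i+1) := by
    refine IsLeast.csInf_eq ⟨⟨hpi1S, hy.2.le⟩, ?_⟩
    rintro z ⟨hzS, hyz⟩
    rcases hsplit z hzS with h | h
    · linarith [hy.1]
    · exact h
  show c (φ y) = _
  simp only [hφ]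
  rw [hAy, hBy]

theorem stmt15
    (H : ℝ) (hH : 0 < H) (c : ℝ → ℝ) (m M : ℝ)
    (hbounds : ∀ y ∈ Set.Icc (0:ℝ) H, m ≤ c y ∧ c y ≤ M)
    (hBV : eVariationOn c (Set.Icc (0:ℝ) H) ≠ ⊤) :
    ∃ cn : ℕ → ℝ → ℝ,
      (∀ n : ℕ, IsStepFunctionOn H (cn n)) ∧
      TendstoUniformlyOn cn c Filter.atTop (Set.Icc (0:ℝ) H) ∧
      (∀ n : ℕ, eVariationOn (cn n) (Set.Icc (0:ℝ) H) ≤ eVariationOn c (Set.Icc (0:ℝ) H)) ∧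
      (∀ n : ℕ, ∀ y ∈ Set.Icc (0:ℝ) H,
        sInf (c '' Set.Icc (0:ℝ) H) ≤ cn n y ∧ cn n y ≤ sSup (c '' Set.Icc (0:ℝ) H)) := by
  have key : ∀ n : ℕ, ∃ φ : ℝ → ℝ, MonotoneOn φ (Set.Icc 0 H) ∧
      Set.MapsTo φ (Set.Icc 0 H) (Set.Icc 0 H) ∧
      (∀ y ∈ Set.Icc (0:ℝ) H, dist (c (φ y)) (c y) ≤ 1 / (n + 1)) ∧
      IsStepFunctionOn H (c ∘ φ) :=
    fun n => stmt15_key H hH c hBV (by positivity)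
  choose φ hmono hmaps hdist hstep using key
  refine ⟨fun n => c ∘ φ n, hstep, ?_, ?_, ?_⟩
  · rw [Metric.tendstoUniformlyOn_iff]
    intro δ hδ
    obtain ⟨n₀, hn₀⟩ := exists_nat_one_div_lt hδ
    filter_upwards [eventually_ge_atTop n₀] with n hn y hy
    have h1 : dist (c y) ((c ∘ φ n) y) ≤ 1 / (n + 1) := by
      rw [dist_comm]; exact hdist n y hy
    have h2 : (1:ℝ) / (n + 1) ≤ 1 / (n₀ + 1) := by
      apply one_div_le_one_div_of_le
      · positivity
      · have : (n₀ : ℝ) ≤ n := Nat.cast_le.2 hn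
        linarith
    calc dist (c y) ((c ∘ φ n) y) ≤ 1 / (n + 1) := h1
      _ ≤ 1 / (n₀ + 1) := h2
      _ < δ := hn₀
  · exact fun n => eVariationOn.comp_le_of_monotoneOn c (φ n) (hmono n) (hmaps n)
  · intro n y hy
    have hmem : (c ∘ φ n) y ∈ c '' Set.Icc (0:ℝ) H := ⟨φ n y, hmaps n hy, rfl⟩
    have hbdB : BddBelow (c '' Set.Icc (0:ℝ) H) := by
      refine ⟨m, ?_⟩; rintro z ⟨w, hw, rfl⟩; exact (hbounds w hw).1
    have hbdA : BddAbove (c '' Set.Icc (0:ℝ) H) := by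
      refine ⟨M, ?_⟩; rintro z ⟨w, hw, rfl⟩; exact (hbounds w hw).2
    exact ⟨csInf_le hbdB hmem, le_csSup hbdA hmem⟩
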